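/- Suppose ℓ(s_i w) > ℓ(w). Then B̃_{k,l}(s_i w) is exactly the union of: B̃_{k,l}(w), the set of s_i-images of elements of B̃_{k,l}(w), and the set of multiset sums α + s_i·β with α ∈ A_{l,i}(w) and β ∈ A_{k,i}(w). Moreover B̃_{k,l}(s_i w) is invariant under the action of s_i on multisets. -/

import Mathlib

def invCount {n : ℕ} (w : Equiv.Perm (Fin n)) : ℕ :=
  (Finset.univ.filter (fun p : Fin n × Fin n => p.1 < p.2 ∧ w p.2 < w p.1)).card

def simpleT (n : ℕ) (i : ℕ) (h : i + 1 < n) : Equiv.Perm (Fin n) :=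
  Equiv.swap ⟨i, Nat.lt_of_succ_lt h⟩ ⟨i + 1, h⟩

/-- The first `l` values of `w`, as a finset of natural numbers. -/
def firstVals {n : ℕ} (w : Equiv.Perm (Fin n)) (l : ℕ) : Finset ℕ :=
  (Finset.univ.filter (fun j : Fin n => (j : ℕ) < l)).image (fun j => (w j : ℕ))

/-- `w^l`: the increasing rearrangement of the first `l` values of `w`. -/
def wSorted {n : ℕ} (w : Equiv.Perm (Fin n)) (l : ℕ) : List ℕ :=
  (firstVals w l).sort (· ≤ ·)

/-- `A_l(w)`: strictly increasing sequences bounded entrywise by `w^l`. -/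
def A {n : ℕ} (w : Equiv.Perm (Fin n)) (l : ℕ) : Set (List ℕ) :=
  {a | a.Chain' (· < ·) ∧ List.Forall₂ (· ≤ ·) a (wSorted w l)}

/-- The entrywise action of the transposition `s_i = (i, i+1)` on a sequence,
followed by reordering increasingly. -/
def siAct (i : ℕ) (a : List ℕ) : List ℕ :=
  List.insertionSort (· ≤ ·) (a.map (fun x => Equiv.swap i (i + 1) x))

/-- `A_{l,i}(w) = {α ∈ A_l(w) : s_i·α ∉ A_l(w)}`. -/
def Ai {n : ℕ} (w : Equiv.Perm (Fin n)) (l : ℕ) (i : ℕ) : Set (List ℕ) :=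
  {a | a ∈ A w l ∧ siAct i a ∉ A w l}

/-- `B̃_{k,l}(w)`: multisets expressible as `α + β` with `α ∈ A_l(w)`, `β ∈ A_k(w)`. -/
def Btil {n : ℕ} (w : Equiv.Perm (Fin n)) (k l : ℕ) : Set (Multiset ℕ) :=
  {η | ∃ a ∈ A w l, ∃ b ∈ A w k, (↑a + ↑b : Multiset ℕ) = η}


namespace St17x
def nsw (i : ℕ) : ℕ → ℕ := fun x => Equiv.swap i (i + 1) x

lemma nsw_def (i x : ℕ) : nsw i x = if x = i then i+1 else if x = i+1 then i else x := by
  simp [nsw, Equiv.swap_apply_def]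

lemma nsw_fix {i x : ℕ} (h1 : x ≠ i) (h2 : x ≠ i+1) : nsw i x = x := by
  simp [nsw_def, h1, h2]

lemma nsw_invol (i x : ℕ) : nsw i (nsw i x) = x := by
  simp [nsw, Equiv.swap_apply_self]

lemma nsw_inj (i : ℕ) : Function.Injective (nsw i) :=
  Function.LeftInverse.injective (g := nsw i) (nsw_invol i)

lemma map_nsw_fix {i : ℕ} {a : List ℕ} (h : ∀ x ∈ a, x ≠ i ∧ x ≠ i+1) :
    a.map (nsw i) = a := by
  rw [List.map_congr_left (fun x hx => nsw_fix (h x hx).1 (h x hx).2)]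
  exact List.map_id a

lemma sorted_le_of_chain {a : List ℕ} (h : a.Chain' (· < ·)) : a.Pairwise (· ≤ ·) :=
  (List.isChain_iff_pairwise.mp h).imp le_of_lt

lemma siAct_eq {i : ℕ} {a b : List ℕ} (hp : (a.map (nsw i)).Perm b)
    (hb : b.Pairwise (· ≤ ·)) : siAct i a = b := by
  exact List.Perm.eq_of_pairwise' (List.pairwise_insertionSort _ _) hb
    ((List.perm_insertionSort _ _).trans hp)

lemma coe_siAct (i : ℕ) (a : List ℕ) :
    (↑(siAct i a) : Multiset ℕ) = Multiset.map (fun x => Equiv.swap i (i+1) x) ↑a := by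
  rw [Multiset.map_coe]
  exact Multiset.coe_eq_coe.mpr (List.perm_insertionSort _ _)

lemma chain'_split {a : List ℕ} {c : ℕ} (h : a.Chain' (· < ·)) (hc : c ∈ a) :
    ∃ a₁ a₂, a = a₁ ++ c :: a₂ ∧ (∀ x ∈ a₁, x < c) ∧ (∀ x ∈ a₂, c < x) := by
  obtain ⟨a₁, a₂, rfl⟩ := List.append_of_mem hc
  unfold List.Chain' at h
  rw [List.isChain_iff_pairwise, List.pairwise_append, List.pairwise_cons] at h
  exact ⟨a₁, a₂, rfl, fun x hx => h.2.2 x hx c (by simp), h.2.1.1⟩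

lemma chain'_parts {a₁ a₂ : List ℕ} {c : ℕ} (h1 : ∀ x ∈ a₁, x < c) (h2 : ∀ x ∈ a₂, c < x)
    (hc1 : a₁.Chain' (· < ·)) (hc2 : a₂.Chain' (· < ·)) : (a₁ ++ c :: a₂).Chain' (· < ·) := by
  unfold List.Chain' at *
  rw [List.isChain_iff_pairwise, List.pairwise_append, List.pairwise_cons] at *
  exact ⟨hc1, ⟨h2, hc2⟩, fun x hx b hb => by
    rcases List.mem_cons.mp hb with rfl | hb
    · exact h1 x hx
    · exact (h1 x hx).trans (h2 b hb)⟩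

lemma chain'_parts_rev {a₁ a₂ : List ℕ} {c : ℕ} (h : (a₁ ++ c :: a₂).Chain' (· < ·)) :
    (∀ x ∈ a₁, x < c) ∧ (∀ x ∈ a₂, c < x) ∧ a₁.Chain' (· < ·) ∧ a₂.Chain' (· < ·) := by
  unfold List.Chain' at h
  rw [List.isChain_iff_pairwise, List.pairwise_append, List.pairwise_cons] at h
  exact ⟨fun x hx => h.2.2 x hx c (by simp), h.2.1.1,
    List.isChain_iff_pairwise.mpr h.1, List.isChain_iff_pairwise.mpr h.2.1.2⟩

lemma forall₂_trans {a b c : List ℕ} (h1 : List.Forall₂ (· ≤ ·) a b)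
    (h2 : List.Forall₂ (· ≤ ·) b c) : List.Forall₂ (· ≤ ·) a c := by
  induction h1 generalizing c with
  | nil => cases h2; exact List.Forall₂.nil
  | cons h t ih =>
    cases h2 with
    | cons h' t' => exact List.Forall₂.cons (h.trans h') (ih t')

lemma forall₂_app_cons {r : ℕ → ℕ → Prop} {a₁ a₂ b₁ b₂ : List ℕ} {c d : ℕ}
    (h1 : List.Forall₂ r a₁ b₁) (hc : r c d) (h2 : List.Forall₂ r a₂ b₂) :
    List.Forall₂ r (a₁ ++ c :: a₂) (b₁ ++ d :: b₂) := by
  induction h1 with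
  | nil => exact List.Forall₂.cons hc h2
  | cons h t ih => exact List.Forall₂.cons h ih

lemma forall₂_split {r : ℕ → ℕ → Prop} {a b₁ b₂ : List ℕ} {d : ℕ}
    (h : List.Forall₂ r a (b₁ ++ d :: b₂)) :
    ∃ a₁ c a₂, a = a₁ ++ c :: a₂ ∧ List.Forall₂ r a₁ b₁ ∧ r c d ∧ List.Forall₂ r a₂ b₂ := by
  induction b₁ generalizing a with
  | nil =>
    cases h with
    | cons hc ht => exact ⟨[], _, _, rfl, List.Forall₂.nil, hc, ht⟩
  | cons y ys ih =>
    cases h with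
    | cons hc ht =>
      obtain ⟨a₁, c, a₂, rfl, h1, h2, h3⟩ := ih ht
      exact ⟨_ :: a₁, c, a₂, rfl, List.Forall₂.cons hc h1, h2, h3⟩

lemma forall₂_split_left {r : ℕ → ℕ → Prop} {a₁ a₂ b : List ℕ} {c : ℕ}
    (h : List.Forall₂ r (a₁ ++ c :: a₂) b) :
    ∃ b₁ d b₂, b = b₁ ++ d :: b₂ ∧ List.Forall₂ r a₁ b₁ ∧ r c d ∧ List.Forall₂ r a₂ b₂ := by
  induction a₁ generalizing b with
  | nil =>
    cases h with
    | cons hc ht => exact ⟨[], _, _, rfl, List.Forall₂.nil, hc, ht⟩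
  | cons y ys ih =>
    cases h with
    | cons hc ht =>
      obtain ⟨b₁, d, b₂, rfl, h1, h2, h3⟩ := ih ht
      exact ⟨_ :: b₁, d, b₂, rfl, List.Forall₂.cons hc h1, h2, h3⟩

lemma forall₂_mid {r : ℕ → ℕ → Prop} {a₁ a₂ b₁ b₂ : List ℕ} {c d : ℕ}
    (h : List.Forall₂ r (a₁ ++ c :: a₂) (b₁ ++ d :: b₂)) (hl : a₁.length = b₁.length) :
    r c d := by
  induction a₁ generalizing b₁ with
  | nil =>
    cases b₁ with
    | nil => cases h; assumption
    | cons => simp at hl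
  | cons y ys ih =>
    cases b₁ with
    | nil => simp at hl
    | cons z zs => cases h with | cons hc ht => exact ih ht (by simpa using hl)

lemma forall₂_mem_lt {a b : List ℕ} {i : ℕ} (h : List.Forall₂ (· ≤ ·) a b)
    (hb : ∀ y ∈ b, y < i) : ∀ x ∈ a, x < i := by
  induction h with
  | nil => simp
  | cons hc ht ih =>
    intro x hx
    rcases List.mem_cons.mp hx with rfl | hx
    · exact lt_of_le_of_lt hc (hb _ (by simp))
    · exact ih (fun y hy => hb y (by simp [hy])) x hx

lemma split_eq {a₁ a₂ b₁ b₂ : List ℕ} {c : ℕ} (h : a₁ ++ c :: a₂ = b₁ ++ c :: b₂)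
    (h1 : ∀ x ∈ a₁, x < c) (h3 : ∀ x ∈ b₁, x < c)
    (h2 : ∀ x ∈ a₂, c < x) (h4 : ∀ x ∈ b₂, c < x) : a₁ = b₁ ∧ a₂ = b₂ := by
  have key : ∀ (u₁ u₂ : List ℕ), (∀ x ∈ u₁, x < c) → (∀ x ∈ u₂, c < x) →
      (u₁ ++ c :: u₂).filter (fun x => decide (x < c)) = u₁ := by
    intro u₁ u₂ hu1 hu2
    rw [List.filter_append]
    rw [List.filter_eq_self.mpr (fun x hx => by simpa using hu1 x hx)]
    rw [List.filter_cons_of_neg (by simp)]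
    rw [List.filter_eq_nil_iff.mpr (fun x hx => by have := hu2 x hx; simp; omega)]
    simp
  have e1 : a₁ = b₁ := by
    rw [← key a₁ a₂ h1 h2, h, key b₁ b₂ h3 h4]
  subst e1
  exact ⟨rfl, by simpa using (List.append_cancel_left h)⟩


-- structure lemmas for siAct
lemma siAct_id {i : ℕ} {a : List ℕ} (hch : a.Chain' (· < ·)) (hmem : i ∈ a ↔ i+1 ∈ a) :
    siAct i a = a := by
  apply siAct_eq (i := i) _ (sorted_le_of_chain hch)
  by_cases hi : i ∈ a
  · -- both in
    have hi1 : i+1 ∈ a := hmem.mp hi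
    have hnd : (↑a : Multiset ℕ).Nodup := by
      have : a.Nodup := (List.isChain_iff_pairwise.mp hch).imp ne_of_lt
      exact_mod_cast this
    rw [← Multiset.coe_eq_coe, ← Multiset.map_coe]
    have e1 : (↑a : Multiset ℕ) = i ::ₘ (↑a : Multiset ℕ).erase i :=
      (Multiset.cons_erase (by exact_mod_cast hi)).symm
    have hi1' : (i+1) ∈ (↑a : Multiset ℕ).erase i :=
      Multiset.mem_erase_of_ne (by omega) |>.mpr (by exact_mod_cast hi1)
    set t := ((↑a : Multiset ℕ).erase i).erase (i+1) with ht
    have e2 : (↑a : Multiset ℕ).erase i = (i+1) ::ₘ t := (Multiset.cons_erase hi1').symm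
    have hit : i ∉ t := fun hmem' => (hnd.not_mem_erase (a := i))
      (Multiset.mem_of_mem_erase hmem')
    
    have hi1t : (i+1) ∉ t := (hnd.erase i).not_mem_erase
    have htfix : Multiset.map (nsw i) t = t := by
      rw [Multiset.map_congr rfl (fun x hx => nsw_fix (by rintro rfl; exact hit hx)
        (by rintro rfl; exact hi1t hx))]
      simp
    rw [e1, e2, Multiset.map_cons, Multiset.map_cons, htfix]
    have : nsw i i = i + 1 := by simp [nsw_def]
    rw [this, show nsw i (i+1) = i by simp [nsw_def]]
    rw [Multiset.cons_swap]
  · have hi1 : i+1 ∉ a := fun hh => hi (hmem.mpr hh)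
    rw [map_nsw_fix (fun x hx => ⟨by rintro rfl; exact hi hx, by rintro rfl; exact hi1 hx⟩)]

lemma siAct_plus {i : ℕ} {a : List ℕ} (hch : a.Chain' (· < ·)) (hi : i ∈ a) (hi1 : i+1 ∉ a) :
    ∃ a₁ a₂, a = a₁ ++ i :: a₂ ∧ siAct i a = a₁ ++ (i+1) :: a₂ ∧
      (∀ x ∈ a₁, x < i) ∧ (∀ x ∈ a₂, i+1 < x) := by
  obtain ⟨a₁, a₂, rfl, h1, h2⟩ := chain'_split hch hi
  have h2' : ∀ x ∈ a₂, i+1 < x := fun x hx => by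
    have := h2 x hx
    have : x ≠ i+1 := fun e => hi1 (e ▸ (by simp [hx] : x ∈ a₁ ++ i :: a₂))
    omega
  refine ⟨a₁, a₂, rfl, ?_, h1, h2'⟩
  have hparts := chain'_parts_rev hch
  apply siAct_eq (i := i) _ (sorted_le_of_chain
    (chain'_parts (fun x hx => (h1 x hx).trans (by omega)) (fun x hx => by have := h2' x hx; omega)
      hparts.2.2.1 hparts.2.2.2))
  rw [List.map_append, List.map_cons]
  rw [map_nsw_fix (fun x hx => by have := h1 x hx; exact ⟨by omega, by omega⟩)]
  rw [map_nsw_fix (fun x hx => by have := h2' x hx; exact ⟨by omega, by omega⟩)]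
  rw [show nsw i i = i+1 by simp [nsw_def]]

lemma siAct_minus {i : ℕ} {a : List ℕ} (hch : a.Chain' (· < ·)) (hi : i ∉ a) (hi1 : i+1 ∈ a) :
    ∃ a₁ a₂, a = a₁ ++ (i+1) :: a₂ ∧ siAct i a = a₁ ++ i :: a₂ ∧
      (∀ x ∈ a₁, x < i) ∧ (∀ x ∈ a₂, i+1 < x) := by
  obtain ⟨a₁, a₂, rfl, h1, h2⟩ := chain'_split hch hi1
  have h1' : ∀ x ∈ a₁, x < i := fun x hx => by
    have := h1 x hx
    have : x ≠ i := fun e => hi (e ▸ (by simp [hx] : x ∈ a₁ ++ (i+1) :: a₂))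
    omega
  refine ⟨a₁, a₂, rfl, ?_, h1', h2⟩
  have hparts := chain'_parts_rev hch
  apply siAct_eq (i := i) _ (sorted_le_of_chain
    (chain'_parts h1' (fun x hx => by have := h2 x hx; omega) hparts.2.2.1 hparts.2.2.2))
  rw [List.map_append, List.map_cons]
  rw [map_nsw_fix (fun x hx => by have := h1' x hx; exact ⟨by omega, by omega⟩)]
  rw [map_nsw_fix (fun x hx => by have := h2 x hx; exact ⟨by omega, by omega⟩)]
  rw [show nsw i (i+1) = i by simp [nsw_def]]

lemma siAct_invol {i : ℕ} {a : List ℕ} (hch : a.Chain' (· < ·)) :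
    siAct i (siAct i a) = a := by
  apply siAct_eq (i := i) _ (sorted_le_of_chain hch)
  calc ((siAct i a).map (nsw i)).Perm ((a.map (nsw i)).map (nsw i)) :=
        (List.perm_insertionSort _ _).map _
    _ = a := by
        rw [List.map_map, show nsw i ∘ nsw i = id from funext (nsw_invol i)]
        exact List.map_id a

-- simpleT and firstVals
lemma coe_simpleT {n : ℕ} (i : ℕ) (h : i+1 < n) (x : Fin n) :
    ((simpleT n i h x : Fin n) : ℕ) = nsw i (x : ℕ) := by
  simp only [simpleT, Equiv.swap_apply_def, nsw_def]
  have hx := x.isLt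
  split_ifs with h1 h2 <;> simp_all [Fin.ext_iff] <;> omega

lemma firstVals_mul {n : ℕ} (w : Equiv.Perm (Fin n)) (i : ℕ) (h : i+1 < n) (m : ℕ) :
    firstVals (simpleT n i h * w) m = (firstVals w m).image (nsw i) := by
  unfold firstVals
  rw [Finset.image_image]
  apply Finset.image_congr
  intro x _
  exact coe_simpleT i h (w x)

lemma mem_firstVals {n : ℕ} {w : Equiv.Perm (Fin n)} {m x : ℕ} :
    x ∈ firstVals w m ↔ ∃ j : Fin n, (j : ℕ) < m ∧ (w j : ℕ) = x := by
  simp [firstVals]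

lemma symm_lt {n : ℕ} (w : Equiv.Perm (Fin n)) (i : ℕ) (h : i+1 < n)
    (hlen : invCount w < invCount (simpleT n i h * w)) :
    (w.symm ⟨i, Nat.lt_of_succ_lt h⟩ : ℕ) < (w.symm ⟨i+1, h⟩ : ℕ) := by
  by_contra hc
  push_neg at hc
  have hle : invCount (simpleT n i h * w) ≤ invCount w := by
    apply Finset.card_le_card
    intro p hp
    simp only [invCount, Finset.mem_filter, Finset.mem_univ, true_and] at hp ⊢
    obtain ⟨hpq, hlt⟩ := hp
    refine ⟨hpq, ?_⟩
    by_cases hc1 : (w p.1 : ℕ) = i ∧ (w p.2 : ℕ) = i+1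
    · exfalso
      have e1 : p.1 = w.symm ⟨i, Nat.lt_of_succ_lt h⟩ := by
        apply_fun w
        simp [Fin.ext_iff, hc1.1]
      have e2 : p.2 = w.symm ⟨i+1, h⟩ := by
        apply_fun w
        simp [Fin.ext_iff, hc1.2]
      have := hpq
      rw [Fin.lt_def, e1, e2] at this
      omega
    · rw [Fin.lt_def] at hlt ⊢
      rw [show ((simpleT n i h * w) p.2 : ℕ) = nsw i ((w p.2 : ℕ)) from coe_simpleT i h _,
        show ((simpleT n i h * w) p.1 : ℕ) = nsw i ((w p.1 : ℕ)) from coe_simpleT i h _] at hlt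
      simp only [nsw_def] at hlt
      split_ifs at hlt <;> omega
  omega

lemma compat {n : ℕ} (w : Equiv.Perm (Fin n)) (i : ℕ) (h : i+1 < n)
    (hlen : invCount w < invCount (simpleT n i h * w)) :
    ∀ m, (i+1) ∈ firstVals w m → i ∈ firstVals w m := by
  intro m hm
  obtain ⟨j, hj, hwj⟩ := mem_firstVals.mp hm
  have hj' : j = w.symm ⟨i+1, h⟩ := by
    apply_fun w
    simp [Fin.ext_iff, hwj]
  have hlt := symm_lt w i h hlen
  have hj2 : (j : ℕ) = (w.symm ⟨i+1, h⟩ : ℕ) := by rw [hj']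
  exact mem_firstVals.mpr ⟨w.symm ⟨i, Nat.lt_of_succ_lt h⟩, by omega, by simp⟩

-- wSorted lemmas
lemma wSorted_chain {n : ℕ} (w : Equiv.Perm (Fin n)) (m : ℕ) :
    (wSorted w m).Chain' (· < ·) :=
  List.isChain_iff_pairwise.mpr (Finset.sortedLT_sort _).pairwise

lemma mem_wSorted {n : ℕ} {w : Equiv.Perm (Fin n)} {m x : ℕ} :
    x ∈ wSorted w m ↔ x ∈ firstVals w m := Finset.mem_sort _

lemma finset_sort_eq {S : Finset ℕ} {b : List ℕ} (hb : b.Pairwise (· ≤ ·))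
    (h : (↑b : Multiset ℕ) = S.val) : Finset.sort S (· ≤ ·) = b := by
  apply List.Perm.eq_of_pairwise' (Finset.pairwise_sort _ _) hb
  rw [← Multiset.coe_eq_coe, Finset.sort_eq, h]

lemma wSorted_nocond {n : ℕ} {w : Equiv.Perm (Fin n)} {i : ℕ} {h : i+1 < n} {m : ℕ}
    (h1 : i ∈ firstVals w m → i+1 ∈ firstVals w m)
    (h2 : i+1 ∈ firstVals w m → i ∈ firstVals w m) :
    wSorted (simpleT n i h * w) m = wSorted w m := by
  unfold wSorted
  rw [firstVals_mul]
  congr 1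
  ext x
  have : ∀ y, (nsw i y = x ↔ y = nsw i x) := by
    intro y
    constructor
    · rintro rfl; rw [nsw_invol]
    · rintro rfl; rw [nsw_invol]
  simp only [Finset.mem_image, this, exists_eq_right]
  rcases Nat.lt_trichotomy x i with hlt | rfl | hgt
  · rw [nsw_fix (by omega) (by omega)]
  · rw [show nsw x x = x + 1 by simp [nsw_def]]
    exact ⟨h2, h1⟩
  · rcases Nat.eq_or_lt_of_le hgt with rfl | hgt2
    · rw [show nsw i (i+1) = i by simp [nsw_def]]
      exact ⟨h1, h2⟩
    · rw [nsw_fix (by omega) (by omega)]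

lemma cond_split {n : ℕ} {w : Equiv.Perm (Fin n)} {i : ℕ} {h : i+1 < n} {m : ℕ}
    (hi : i ∈ firstVals w m) (hi1 : i+1 ∉ firstVals w m) :
    ∃ W₁ W₂, wSorted w m = W₁ ++ i :: W₂ ∧
      wSorted (simpleT n i h * w) m = W₁ ++ (i+1) :: W₂ ∧
      (∀ x ∈ W₁, x < i) ∧ (∀ x ∈ W₂, i+1 < x) := by
  have hch := wSorted_chain w m
  have hiw : i ∈ wSorted w m := mem_wSorted.mpr hi
  obtain ⟨W₁, W₂, hW, h1, h2⟩ := chain'_split hch hiw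
  have h2' : ∀ x ∈ W₂, i+1 < x := fun x hx => by
    have := h2 x hx
    have : x ≠ i+1 := fun e => hi1 (e ▸ mem_wSorted.mp (by rw [hW]; simp [hx]))
    omega
  refine ⟨W₁, W₂, hW, ?_, h1, h2'⟩
  unfold wSorted
  rw [firstVals_mul]
  apply finset_sort_eq
  · exact sorted_le_of_chain (chain'_parts (fun x hx => (h1 x hx).trans (by omega))
      (fun x hx => by have := h2' x hx; omega) (chain'_parts_rev (hW ▸ hch)).2.2.1
      (chain'_parts_rev (hW ▸ hch)).2.2.2)
  · have hval : ((firstVals w m).image (nsw i)).val = (firstVals w m).val.map (nsw i) := by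
      rw [Finset.image_val]
      exact Multiset.dedup_eq_self.mpr ((firstVals w m).nodup.map (nsw_inj i))
    rw [hval, ← Finset.sort_eq (firstVals w m) (· ≤ ·)]
    show (↑(W₁ ++ (i+1) :: W₂) : Multiset ℕ) = Multiset.map (nsw i) ↑(wSorted w m)
    rw [hW, Multiset.map_coe, Multiset.coe_eq_coe, List.map_append, List.map_cons]
    rw [map_nsw_fix (fun x hx => by have := h1 x hx; exact ⟨by omega, by omega⟩)]
    rw [map_nsw_fix (fun x hx => by have := h2' x hx; exact ⟨by omega, by omega⟩)]
    rw [show nsw i i = i+1 by simp [nsw_def]]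

section Akey
variable {n : ℕ} {w : Equiv.Perm (Fin n)} {i : ℕ} {h : i+1 < n}
variable (hcomp : ∀ m, (i+1) ∈ firstVals w m → i ∈ firstVals w m)

include hcomp

lemma A_mono {m : ℕ} : A w m ⊆ A (simpleT n i h * w) m := by
  rintro a ⟨hch, hf⟩
  refine ⟨hch, ?_⟩
  by_cases hcond : i ∈ firstVals w m ∧ i+1 ∉ firstVals w m
  · obtain ⟨W₁, W₂, hW, hW', _, _⟩ := cond_split (h := h) hcond.1 hcond.2
    rw [hW']
    refine forall₂_trans (hW ▸ hf) (forall₂_app_cons ?_ (by omega) ?_) <;>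
      exact List.forall₂_same.mpr (fun x _ => le_refl x)
  · rw [wSorted_nocond (fun hh => by tauto) (hcomp m)]
    exact hf

omit hcomp in
lemma Ai_mem {m : ℕ} {a : List ℕ} (ha : a ∈ A w m) (hna : siAct i a ∉ A w m) :
    i ∈ a ∧ i+1 ∉ a := by
  obtain ⟨hch, hf⟩ := ha
  by_cases hi : i ∈ a
  · refine ⟨hi, fun hi1 => hna ?_⟩
    rw [siAct_id hch ⟨fun _ => hi1, fun _ => hi⟩]
    exact ⟨hch, hf⟩
  · exfalso
    by_cases hi1 : i+1 ∈ a
    · obtain ⟨a₁, a₂, hsplit, hact, h1, h2⟩ := siAct_minus hch hi hi1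
      apply hna
      constructor
      · rw [hact]
        exact chain'_parts h1 (fun x hx => by have := h2 x hx; omega)
          (chain'_parts_rev (hsplit ▸ hch)).2.2.1 (chain'_parts_rev (hsplit ▸ hch)).2.2.2
      · rw [hact]
        refine forall₂_trans (forall₂_app_cons ?_ (by omega : i ≤ i+1) ?_) (hsplit ▸ hf) <;>
          exact List.forall₂_same.mpr (fun x _ => le_refl x)
    · apply hna
      rw [siAct_id hch ⟨fun hh => absurd hh hi, fun hh => absurd hh hi1⟩]
      exact ⟨hch, hf⟩

omit hcomp in
lemma Ai_siAct {m : ℕ} {a : List ℕ} (ha : a ∈ A w m) (hna : siAct i a ∉ A w m) :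
    siAct i a ∈ A (simpleT n i h * w) m := by
  obtain ⟨hia, hi1a⟩ := Ai_mem ha hna
  obtain ⟨hch, hf⟩ := ha
  obtain ⟨a₁, a₂, hsplit, hact, h1, h2⟩ := siAct_plus hch hia hi1a
  have hgoodchain : (a₁ ++ (i+1) :: a₂).Chain' (· < ·) :=
    chain'_parts (fun x hx => by have := h1 x hx; omega) h2
      (chain'_parts_rev (hsplit ▸ hch)).2.2.1 (chain'_parts_rev (hsplit ▸ hch)).2.2.2
  obtain ⟨B₁, d, B₂, hWsplit, hf1, hfd, hf2⟩ := forall₂_split_left (hsplit ▸ hf)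
  -- d = i
  have hd : d = i := by
    by_contra hd
    apply hna
    refine ⟨hact ▸ hgoodchain, ?_⟩
    rw [hact, hWsplit]
    exact forall₂_app_cons hf1 (by omega) hf2
  rw [hd] at hWsplit hfd
  -- cond holds
  have hicond : i ∈ firstVals w m := mem_wSorted.mp (by rw [hWsplit]; simp)
  have hWch := wSorted_chain w m
  have hWparts := chain'_parts_rev (hWsplit ▸ hWch)
  have h2' : ∀ x ∈ a₂, i+1 < x := h2
  have hi1cond : i+1 ∉ firstVals w m := by
    intro hmem
    have hi1W : (i:ℕ)+1 ∈ wSorted w m := mem_wSorted.mpr hmem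
    rw [hWsplit] at hi1W
    rcases List.mem_append.mp hi1W with hh | hh
    · have := hWparts.1 _ hh; omega
    · rcases List.mem_cons.mp hh with hh2 | hh2
      · omega
      · -- i+1 ∈ B₂; split B₂ and contradict via a₂ bound
        obtain ⟨C₁, C₂, hB2, hc1, _⟩ := chain'_split hWparts.2.2.2 hh2
        rw [hB2] at hf2
        obtain ⟨d₁, e, d₂, hd12, _, hee, _⟩ := forall₂_split hf2
        have : e ∈ a₂ := by rw [hd12]; simp
        have := h2' e this
        omega
  obtain ⟨W₁, W₂, hW, hW', hw1, hw2⟩ := cond_split (h := h) hicond hi1cond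
  have huniq := split_eq (hWsplit.symm.trans hW) hWparts.1 hw1
    (fun x hx => by have := hWparts.2.1 x hx; omega) (fun x hx => by have := hw2 x hx; omega)
  refine ⟨hact ▸ hgoodchain, ?_⟩
  rw [hact, hW']
  exact forall₂_app_cons (huniq.1 ▸ hf1) (le_refl _) (huniq.2 ▸ hf2)


lemma A_decomp {m : ℕ} {a' : List ℕ} (ha' : a' ∈ A (simpleT n i h * w) m) :
    a' ∈ A w m ∨ ∃ a, (a ∈ A w m ∧ siAct i a ∉ A w m) ∧ siAct i a = a' := by
  obtain ⟨hch, hf⟩ := ha'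
  by_cases hcond : i ∈ firstVals w m ∧ i+1 ∉ firstVals w m
  · obtain ⟨W₁, W₂, hW, hW', hw1, hw2⟩ := cond_split (h := h) hcond.1 hcond.2
    rw [hW'] at hf
    obtain ⟨a₁, c, a₂, hsplit, hf1, hfc, hf2⟩ := forall₂_split hf
    by_cases hc : c ≤ i
    · left
      refine ⟨hch, ?_⟩
      rw [hW, hsplit]
      exact forall₂_app_cons hf1 hc hf2
    · have hc' : c = i+1 := by omega
      subst hc'
      have hparts := chain'_parts_rev (hsplit ▸ hch)
      have ha1 : ∀ x ∈ a₁, x < i := forall₂_mem_lt hf1 hw1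
      have hachain : (a₁ ++ i :: a₂).Chain' (· < ·) :=
        chain'_parts ha1 (fun x hx => by have := hparts.2.1 x hx; omega) hparts.2.2.1 hparts.2.2.2
      have haA : (a₁ ++ i :: a₂) ∈ A w m := by
        refine ⟨hachain, ?_⟩
        rw [hW]
        exact forall₂_app_cons hf1 (le_refl i) hf2
      have hact : siAct i (a₁ ++ i :: a₂) = a' := by
        apply siAct_eq (i := i) _ (sorted_le_of_chain (hsplit ▸ hch))
        rw [hsplit, List.map_append, List.map_cons]
        rw [map_nsw_fix (fun x hx => by have := ha1 x hx; exact ⟨by omega, by omega⟩)]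
        rw [map_nsw_fix (fun x hx => by have := hparts.2.1 x hx; exact ⟨by omega, by omega⟩)]
        rw [show nsw i i = i+1 by simp [nsw_def]]
      right
      refine ⟨a₁ ++ i :: a₂, ⟨haA, ?_⟩, hact⟩
      rintro ⟨-, hfbad⟩
      rw [hact, hsplit, hW] at hfbad
      have := forall₂_mid hfbad (List.Forall₂.length_eq hf1)
      omega
  · left
    refine ⟨hch, ?_⟩
    rwa [wSorted_nocond (fun hh => by tauto) (hcomp m)] at hf

lemma A_closed {m : ℕ} {a : List ℕ} (ha : a ∈ A (simpleT n i h * w) m) :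
    siAct i a ∈ A (simpleT n i h * w) m := by
  rcases A_decomp hcomp ha with haw | ⟨a₀, ⟨ha₀, hna₀⟩, rfl⟩
  · by_cases hai : siAct i a ∈ A w m
    · exact A_mono hcomp hai
    · exact Ai_siAct haw hai
  · rw [siAct_invol ha₀.1]
    exact A_mono hcomp ha₀

end Akey

-- multiset lemmas
lemma map_swap_invol (i : ℕ) (η : Multiset ℕ) :
    Multiset.map (fun x => Equiv.swap i (i+1) x) (Multiset.map (fun x => Equiv.swap i (i+1) x) η) = η := by
  rw [Multiset.map_map]
  have : ((fun x => Equiv.swap i (i+1) x) ∘ fun x => Equiv.swap i (i+1) x) = id :=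
    funext (nsw_invol i)
  rw [this, Multiset.map_id]

lemma cross_eq {i : ℕ} {a b : List ℕ} (hcha : a.Chain' (· < ·)) (hchb : b.Chain' (· < ·))
    (hia : i ∈ a) (hi1a : i+1 ∉ a) (hib : i ∈ b) (hi1b : i+1 ∉ b) :
    (↑(siAct i a) : Multiset ℕ) + ↑b = ↑a + ↑(siAct i b) := by
  obtain ⟨a₁, a₂, hsa, haa, _, _⟩ := siAct_plus hcha hia hi1a
  obtain ⟨b₁, b₂, hsb, hbb, _, _⟩ := siAct_plus hchb hib hi1b
  rw [haa, hbb, hsa, hsb]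
  have coeapp : ∀ (u v : List ℕ) (c : ℕ), (↑(u ++ c :: v) : Multiset ℕ) = ↑u + ({c} + ↑v) := by
    intro u v c
    simp [Multiset.singleton_add]
  rw [coeapp, coeapp, coeapp, coeapp]
  abel

end St17x

open St17x in
/-- If `ℓ(s_i w) > ℓ(w)`, then `B̃_{k,l}(s_i w)` is the union of `B̃_{k,l}(w)`, its
`s_i`-images, and sums of elements of `A_{l,i}(w)` with `s_i`-images of elements of
`A_{k,i}(w)`; moreover `B̃_{k,l}(s_i w)` is `s_i`-invariant. -/
theorem stmt17 (n : ℕ) (w : Equiv.Perm (Fin n)) (i : ℕ) (h : i + 1 < n)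
    (k l : ℕ) (hkl : k ≤ l)
    (hlen : invCount w < invCount (simpleT n i h * w)) :
    Btil (simpleT n i h * w) k l =
      Btil w k l ∪
      ((fun η => Multiset.map (fun x => Equiv.swap i (i + 1) x) η) '' Btil w k l) ∪
      {η | ∃ a ∈ Ai w l i, ∃ b ∈ Ai w k i,
        (↑a : Multiset ℕ) + (↑(siAct i b) : Multiset ℕ) = η} ∧
    ∀ η ∈ Btil (simpleT n i h * w) k l,
      Multiset.map (fun x => Equiv.swap i (i + 1) x) η ∈ Btil (simpleT n i h * w) k l := by
  have hcomp := compat w i h hlen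
  constructor
  · ext η
    simp only [Set.mem_union, Set.mem_image, Set.mem_setOf_eq]
    constructor
    · rintro ⟨a, ha, b, hb, rfl⟩
      rcases A_decomp (h := h) hcomp ha with haw | ⟨a₀, ⟨ha₀, hna₀⟩, rfl⟩ <;>
        rcases A_decomp (h := h) hcomp hb with hbw | ⟨b₀, ⟨hb₀, hnb₀⟩, rfl⟩
      · exact Or.inl (Or.inl ⟨a, haw, b, hbw, rfl⟩)
      · by_cases hai : siAct i a ∈ A w l
        · refine Or.inl (Or.inr ⟨↑(siAct i a) + ↑b₀, ⟨siAct i a, hai, b₀, hb₀, rfl⟩, ?_⟩)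
          rw [Multiset.map_add, ← coe_siAct, ← coe_siAct, siAct_invol haw.1]
        · exact Or.inr ⟨a, ⟨haw, hai⟩, b₀, ⟨hb₀, hnb₀⟩, rfl⟩
      · by_cases hbi : siAct i b ∈ A w k
        · refine Or.inl (Or.inr ⟨↑a₀ + ↑(siAct i b), ⟨a₀, ha₀, siAct i b, hbi, rfl⟩, ?_⟩)
          rw [Multiset.map_add, ← coe_siAct, ← coe_siAct, siAct_invol hbw.1]
        · refine Or.inr ⟨a₀, ⟨ha₀, hna₀⟩, b, ⟨hbw, hbi⟩, ?_⟩
          obtain ⟨hia, hi1a⟩ := Ai_mem ha₀ hna₀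
          obtain ⟨hib, hi1b⟩ := Ai_mem hbw hbi
          exact (cross_eq ha₀.1 hbw.1 hia hi1a hib hi1b).symm
      · refine Or.inl (Or.inr ⟨↑a₀ + ↑b₀, ⟨a₀, ha₀, b₀, hb₀, rfl⟩, ?_⟩)
        rw [Multiset.map_add, ← coe_siAct, ← coe_siAct]
    · rintro ((⟨a, ha, b, hb, rfl⟩ | ⟨ξ, ⟨a, ha, b, hb, rfl⟩, rfl⟩) | ⟨a, ⟨ha, hna⟩, b, ⟨hb, hnb⟩, rfl⟩)
      · exact ⟨a, A_mono hcomp ha, b, A_mono hcomp hb, rfl⟩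
      · rw [Multiset.map_add, ← coe_siAct, ← coe_siAct]
        exact ⟨_, A_closed hcomp (A_mono hcomp ha), _, A_closed hcomp (A_mono hcomp hb), rfl⟩
      · exact ⟨a, A_mono hcomp ha, siAct i b, Ai_siAct hb hnb, rfl⟩
  · rintro η ⟨a, ha, b, hb, rfl⟩
    rw [Multiset.map_add, ← coe_siAct, ← coe_siAct]
    exact ⟨_, A_closed hcomp ha, _, A_closed hcomp hb, rfl⟩
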